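/- Let L > 0, C₁ > 0, C₂ > 0 be real numbers and q₁ < q₂ positive real numbers, and let h > 0. Set ħ₁ = (L/C₁)^{1/q₁}, ħ₂ = (L/C₂)^{1/q₂}, h* = (C₁/C₂)^{1/(q₂-q₁)}, and βᵢ = min(L, Cᵢ·h^{qᵢ}) for i = 1, 2. Let X₁ and X₂ be independent real random variables on a probability space (Ω, ℙ), with Xᵢ uniformly distributed on [0, βᵢ]. If h* ≥ max(ħ₁, ħ₂) and 0 < h ≤ ħ₁, then ℙ{X₁ ≤ X₂} = (1/2)·(h/h*)^{q₂-q₁}. -/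

import Mathlib

open MeasureTheory ProbabilityTheory


lemma unif_prob_le {Ω : Type*} [MeasurableSpace Ω] (P : Measure Ω) [IsProbabilityMeasure P]
    (a b : ℝ) (ha : 0 < a) (hb : 0 < b) (hba : b ≤ a)
    (X₁ X₂ : Ω → ℝ) (hX₁ : Measurable X₁) (hX₂ : Measurable X₂)
    (hindep : IndepFun X₁ X₂ P)
    (h1 : Measure.map X₁ P = volume.withDensity
        (fun x => ENNReal.ofReal ((Set.Icc (0:ℝ) a).indicator (fun _ => 1 / a) x)))
    (h2 : Measure.map X₂ P = volume.withDensity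
        (fun x => ENNReal.ofReal ((Set.Icc (0:ℝ) b).indicator (fun _ => 1 / b) x))) :
    P {ω | X₁ ω ≤ X₂ ω} = ENNReal.ofReal (b / (2 * a)) := by
  have hsle : MeasurableSet {p : ℝ × ℝ | p.1 ≤ p.2} :=
    measurableSet_le measurable_fst measurable_snd
  -- inner measure
  have hν : ∀ x : ℝ, (Measure.map X₂ P) (Set.Ici x)
      = ENNReal.ofReal ((1/b) * (b - max 0 x)) := by
    intro x
    rw [h2, withDensity_apply _ measurableSet_Ici]
    have hind : ∀ y : ℝ, ENNReal.ofReal ((Set.Icc (0:ℝ) b).indicator (fun _ => 1 / b) y)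
        = (Set.Icc (0:ℝ) b).indicator (fun _ => ENNReal.ofReal (1 / b)) y := by
      intro y; by_cases hy : y ∈ Set.Icc (0:ℝ) b <;> simp [hy]
    simp_rw [hind]
    rw [lintegral_indicator measurableSet_Icc, setLIntegral_const,
      Measure.restrict_apply measurableSet_Icc]
    have : Set.Icc (0:ℝ) b ∩ Set.Ici x = Set.Icc (max 0 x) b := by
      ext y; simp [max_le_iff]; tauto
    rw [this, Real.volume_Icc, ← ENNReal.ofReal_mul (by positivity)]
  -- rewrite via product measure
  have hmap : P {ω | X₁ ω ≤ X₂ ω}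
      = ((Measure.map X₁ P).prod (Measure.map X₂ P)) {p : ℝ × ℝ | p.1 ≤ p.2} := by
    rw [← (indepFun_iff_map_prod_eq_prod_map_map hX₁.aemeasurable hX₂.aemeasurable).mp hindep,
      Measure.map_apply (hX₁.prodMk hX₂) hsle]
    rfl
  rw [hmap, Measure.prod_apply hsle]
  have hpre : ∀ x : ℝ, (Prod.mk x ⁻¹' {p : ℝ × ℝ | p.1 ≤ p.2}) = Set.Ici x := fun x => rfl
  simp_rw [hpre, hν, h1]
  have hg : Measurable (fun x : ℝ => ENNReal.ofReal ((1/b) * (b - max 0 x))) := by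
    apply Measurable.ennreal_ofReal
    exact (continuous_const.mul (continuous_const.sub (continuous_const.max continuous_id))).measurable
  have hf : Measurable (fun x : ℝ =>
      ENNReal.ofReal ((Set.Icc (0:ℝ) a).indicator (fun _ => 1 / a) x)) :=
    (measurable_const.indicator measurableSet_Icc).ennreal_ofReal
  rw [lintegral_withDensity_eq_lintegral_mul volume hf hg]
  have hprod : ∀ x : ℝ, ENNReal.ofReal ((Set.Icc (0:ℝ) a).indicator (fun _ => 1 / a) x)
        * ENNReal.ofReal ((1/b) * (b - max 0 x))
      = (Set.Icc (0:ℝ) a).indicator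
          (fun x => ENNReal.ofReal (1/a) * ENNReal.ofReal ((1/b) * (b - max 0 x))) x := by
    intro x; by_cases hx : x ∈ Set.Icc (0:ℝ) a <;> simp [hx]
  simp only [Pi.mul_apply]
  simp_rw [hprod]
  rw [lintegral_indicator measurableSet_Icc]
  have hcongr : ∀ x ∈ Set.Icc (0:ℝ) a,
      ENNReal.ofReal (1/a) * ENNReal.ofReal ((1/b) * (b - max 0 x))
      = ENNReal.ofReal ((1/(a*b)) * max (b - x) 0) := by
    intro x hx
    rw [max_eq_right hx.1]
    rcases le_total (b - x) 0 with hbx | hbx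
    · rw [max_eq_right hbx, mul_zero, ENNReal.ofReal_zero,
        ENNReal.ofReal_of_nonpos (mul_nonpos_of_nonneg_of_nonpos (by positivity) hbx), mul_zero]
    · rw [max_eq_left hbx, ← ENNReal.ofReal_mul (by positivity)]
      ring_nf
  rw [setLIntegral_congr_fun measurableSet_Icc (fun x hx => hcongr x hx)]
  have hF : Continuous (fun x : ℝ => (1/(a*b)) * max (b - x) 0) :=
    continuous_const.mul ((continuous_const.sub continuous_id).max continuous_const)
  rw [← ofReal_integral_eq_lintegral_ofReal (hF.integrableOn_Icc.integrable)
    (Filter.Eventually.of_forall (fun x => by positivity))]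
  congr 1
  -- real integral computation
  rw [MeasureTheory.integral_Icc_eq_integral_Ioc, ← intervalIntegral.integral_of_le ha.le]
  have hi1 : IntervalIntegrable (fun x : ℝ => (1/(a*b)) * max (b - x) 0) volume 0 b :=
    hF.intervalIntegrable _ _
  have hi2 : IntervalIntegrable (fun x : ℝ => (1/(a*b)) * max (b - x) 0) volume b a :=
    hF.intervalIntegrable _ _
  rw [← intervalIntegral.integral_add_adjacent_intervals hi1 hi2]
  have e1 : ∫ x in (0:ℝ)..b, (1/(a*b)) * max (b - x) 0 = ∫ x in (0:ℝ)..b, (1/(a*b)) * (b - x) := by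
    apply intervalIntegral.integral_congr
    intro x hx
    rw [Set.uIcc_of_le hb.le] at hx
    dsimp only
    rw [max_eq_left (sub_nonneg.2 hx.2)]
  have e2 : ∫ x in b..a, (1/(a*b)) * max (b - x) 0 = 0 := by
    have hz : Set.EqOn (fun x : ℝ => (1/(a*b)) * max (b - x) 0) (fun _ => (0:ℝ))
        (Set.uIcc b a) := by
      intro x hx
      rw [Set.uIcc_of_le hba] at hx
      dsimp only
      rw [max_eq_right (sub_nonpos.2 hx.1), mul_zero]
    rw [intervalIntegral.integral_congr hz, intervalIntegral.integral_zero]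
  rw [e1, e2, add_zero, intervalIntegral.integral_const_mul,
    intervalIntegral.integral_sub intervalIntegrable_const (continuous_id'.intervalIntegrable 0 b),
    intervalIntegral.integral_const, integral_id, smul_eq_mul]
  field_simp
  ring

/-- If h* ≥ max(ℏ₁,ℏ₂) and 0 < h ≤ ℏ₁, then P{X₁ ≤ X₂} = (1/2)·(h/h*)^(q₂-q₁). -/
theorem prob_dist_case1_small
    {Ω : Type*} [MeasurableSpace Ω] (P : Measure Ω) [IsProbabilityMeasure P]
    (L C₁ C₂ q₁ q₂ h : ℝ) (hL : 0 < L) (hC₁ : 0 < C₁) (hC₂ : 0 < C₂)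
    (hq₁ : 0 < q₁) (hq : q₁ < q₂) (hh : 0 < h)
    (ℏ₁ ℏ₂ hstar β₁ β₂ : ℝ)
    (hℏ₁ : ℏ₁ = (L / C₁) ^ (1 / q₁)) (hℏ₂ : ℏ₂ = (L / C₂) ^ (1 / q₂))
    (hstar_def : hstar = (C₁ / C₂) ^ (1 / (q₂ - q₁)))
    (hβ₁ : β₁ = min L (C₁ * h ^ q₁)) (hβ₂ : β₂ = min L (C₂ * h ^ q₂))
    (X₁ X₂ : Ω → ℝ) (hX₁ : Measurable X₁) (hX₂ : Measurable X₂)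
    (hindep : IndepFun X₁ X₂ P)
    (hX₁unif : Measure.map X₁ P =
      volume.withDensity
        (fun x => ENNReal.ofReal ((Set.Icc (0:ℝ) β₁).indicator (fun _ => 1 / β₁) x)))
    (hX₂unif : Measure.map X₂ P =
      volume.withDensity
        (fun x => ENNReal.ofReal ((Set.Icc (0:ℝ) β₂).indicator (fun _ => 1 / β₂) x)))
    (hcase : max ℏ₁ ℏ₂ ≤ hstar) (hrange : h ≤ ℏ₁) :
    P {ω | X₁ ω ≤ X₂ ω} = ENNReal.ofReal ((1/2) * (h / hstar) ^ (q₂ - q₁)) := by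
  have hdq : 0 < q₂ - q₁ := sub_pos.2 hq
  have hstar_pos : 0 < hstar := by rw [hstar_def]; positivity
  have hstar_pow : hstar ^ (q₂ - q₁) = C₁ / C₂ := by
    rw [hstar_def, ← Real.rpow_mul (by positivity), one_div,
      inv_mul_cancel₀ hdq.ne', Real.rpow_one]
  have hhstar : h ≤ hstar := hrange.trans ((le_max_left _ _).trans hcase)
  -- β₁ = C₁ h^q₁
  have hL1 : C₁ * h ^ q₁ ≤ L := by
    have h1 : h ^ q₁ ≤ ℏ₁ ^ q₁ := Real.rpow_le_rpow hh.le hrange hq₁.le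
    have h2 : ℏ₁ ^ q₁ = L / C₁ := by
      rw [hℏ₁, ← Real.rpow_mul (by positivity), one_div,
        inv_mul_cancel₀ hq₁.ne', Real.rpow_one]
    rw [h2] at h1
    calc C₁ * h ^ q₁ ≤ C₁ * (L / C₁) := by nlinarith
    _ = L := by field_simp
  have hβ₁' : β₁ = C₁ * h ^ q₁ := by rw [hβ₁, min_eq_right hL1]
  -- β₂ = C₂ h^q₂ and β₂ ≤ β₁
  have h21 : C₂ * h ^ q₂ ≤ C₁ * h ^ q₁ := by
    have hsplit : h ^ q₂ = h ^ q₁ * h ^ (q₂ - q₁) := by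
      rw [← Real.rpow_add hh]; ring_nf
    have hle : h ^ (q₂ - q₁) ≤ C₁ / C₂ := by
      rw [← hstar_pow]; exact Real.rpow_le_rpow hh.le hhstar hdq.le
    have hq₁pos : (0:ℝ) < h ^ q₁ := Real.rpow_pos_of_pos hh _
    calc C₂ * h ^ q₂ = C₂ * h ^ q₁ * h ^ (q₂ - q₁) := by rw [hsplit]; ring
    _ ≤ C₂ * h ^ q₁ * (C₁ / C₂) := mul_le_mul_of_nonneg_left hle (by positivity)
    _ = C₁ * h ^ q₁ := by field_simp
  have hβ₂' : β₂ = C₂ * h ^ q₂ := by rw [hβ₂, min_eq_right (h21.trans hL1)]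
  have hβ₁pos : 0 < β₁ := by rw [hβ₁']; positivity
  have hβ₂pos : 0 < β₂ := by rw [hβ₂']; positivity
  have hba : β₂ ≤ β₁ := by rw [hβ₁', hβ₂']; exact h21
  rw [unif_prob_le P β₁ β₂ hβ₁pos hβ₂pos hba X₁ X₂ hX₁ hX₂ hindep hX₁unif hX₂unif]
  congr 1
  have hq₂pos : (0:ℝ) < h ^ q₂ := Real.rpow_pos_of_pos hh _
  have hq₁pos : (0:ℝ) < h ^ q₁ := Real.rpow_pos_of_pos hh _
  rw [Real.div_rpow hh.le hstar_pos.le, hstar_pow, hβ₁', hβ₂',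
    show h ^ (q₂ - q₁) = h ^ q₂ / h ^ q₁ from Real.rpow_sub hh _ _]
  field_simp
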